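/- arXiv:1602.02007 — 2 statements merged into one kernel-verified Lean document; each statement's English description precedes it below -/
import Mathlib

section
/- Let X_n, Y_n be càdlàg functions on [0,∞) and X, Y continuous functions such that each Y_n is nondecreasing, and X_n → X, Y_n → Y locally uniformly. Then Y is nondecreasing and ∫₀ᵗ X_n(s) dY_n(s) → ∫₀ᵗ X(s) dY(s) locally uniformly in t ≥ 0. -/
open MeasureTheory Set Filter Function

/-- `x` is càdlàg: right-continuous with left limits. -/
def IsCadlag (x : ℝ → ℝ) : Prop :=
  (∀ t : ℝ, ContinuousWithinAt x (Set.Ici t) t) ∧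
  (∀ t : ℝ, Tendsto x (nhdsWithin t (Set.Iio t)) (nhds (leftLim x t)))


-- measurability of right-continuous function
lemma measurable_of_rightCont {f : ℝ → ℝ}
    (hf : ∀ t : ℝ, ContinuousWithinAt f (Set.Ici t) t) : Measurable f := by
  have hmeas : ∀ k : ℕ, Measurable (fun t : ℝ => f ((⌈t * 2 ^ k⌉ : ℤ) / 2 ^ k)) := by
    intro k
    exact (measurable_of_countable (fun z : ℤ => f ((z : ℝ) / 2 ^ k))).comp
      (Int.measurable_ceil.comp (measurable_id.mul_const _))
  apply measurable_of_tendsto_metrizable hmeas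
  rw [tendsto_pi_nhds]
  intro t
  have h2k : ∀ k : ℕ, (0:ℝ) < 2 ^ k := fun k => by positivity
  have hle : ∀ k : ℕ, t ≤ (⌈t * 2 ^ k⌉ : ℤ) / 2 ^ k := by
    intro k
    rw [le_div_iff₀ (h2k k)]
    exact Int.le_ceil _
  have hlt : ∀ k : ℕ, ((⌈t * 2 ^ k⌉ : ℤ) : ℝ) / 2 ^ k ≤ t + (1/2) ^ k := by
    intro k
    rw [div_le_iff₀ (h2k k)]
    have := (Int.ceil_lt_add_one (t * 2 ^ k)).le
    calc ((⌈t * 2 ^ k⌉ : ℤ) : ℝ) ≤ t * 2 ^ k + 1 := this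
      _ = (t + (1/2)^k) * 2 ^ k := by rw [add_mul, ← mul_pow]; norm_num
  have htend : Tendsto (fun k : ℕ => ((⌈t * 2 ^ k⌉ : ℤ) : ℝ) / 2 ^ k) atTop (nhds t) := by
    have h2 : Tendsto (fun k : ℕ => t + (1/2:ℝ) ^ k) atTop (nhds t) := by
      have : Tendsto (fun k : ℕ => (1/2:ℝ) ^ k) atTop (nhds 0) := by
        apply tendsto_pow_atTop_nhds_zero_of_lt_one <;> norm_num
      simpa using tendsto_const_nhds.add this
    exact tendsto_of_tendsto_of_tendsto_of_le_of_le' tendsto_const_nhds h2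
      (Eventually.of_forall hle) (Eventually.of_forall hlt)
  exact (hf t).tendsto.comp
    (tendsto_nhdsWithin_of_tendsto_nhds_of_eventually_within _ htend
      (Eventually.of_forall (fun k => hle k)))

lemma integral_Ioc_sum (μ : Measure ℝ) [IsLocallyFiniteMeasure μ] {g : ℝ → ℝ}
    (hg : Continuous g) (u : ℕ → ℝ) (hu : Monotone u) (K : ℕ) :
    ∫ x in Ioc (u 0) (u K), g x ∂μ
      = ∑ i ∈ Finset.range K, ∫ x in Ioc (u i) (u (i+1)), g x ∂μ := by
  induction K with
  | zero => simp
  | succ K ih =>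
    rw [Finset.sum_range_succ, ← ih,
      ← setIntegral_union (Set.Ioc_disjoint_Ioc_of_le le_rfl) measurableSet_Ioc
        (hg.integrableOn_Ioc) (hg.integrableOn_Ioc),
      Set.Ioc_union_Ioc_eq_Ioc (hu (Nat.zero_le K)) (hu (Nat.le_succ K))]

lemma key (f : StieltjesFunction ℝ) {g : ℝ → ℝ} (hg : Continuous g)
    {T : ℝ} (hT : 0 < T) {K : ℕ} (hK : 0 < K) {ε' : ℝ} (hε' : 0 ≤ ε')
    (hmod : ∀ x ∈ Icc (0:ℝ) T, ∀ y ∈ Icc (0:ℝ) T, |x - y| ≤ T / K → |g x - g y| ≤ ε')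
    {t : ℝ} (ht : t ∈ Icc (0:ℝ) T) :
    |(∫ x in Ioc (0:ℝ) t, g x ∂f.measure) -
      ∑ i ∈ Finset.range K, g (i * T / K) *
        (f (min ((i+1) * T / K) t) - f (min (i * T / K) t))| ≤ ε' * (f T - f 0) := by
  obtain ⟨ht0, htT⟩ := ht
  have hTK : 0 ≤ T / K := by positivity
  set u : ℕ → ℝ := fun i => min (i * T / K) t with hu_def
  have hu : Monotone u := by
    intro i j hij
    apply min_le_min _ le_rfl
    have : (i:ℝ) ≤ j := by exact_mod_cast hij
    have := mul_le_mul_of_nonneg_right this (le_of_lt hT)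
    exact div_le_div_of_nonneg_right (by nlinarith) (by positivity) |>.trans_eq rfl
  have hu0 : u 0 = 0 := by simp [hu_def, ht0]
  have huK : u K = t := by
    have : (K:ℝ) * T / K = T := by field_simp
    simp [hu_def, this, htT]
  have hufnn : ∀ i, 0 ≤ f (u (i+1)) - f (u i) :=
    fun i => sub_nonneg.2 (f.mono (hu (Nat.le_succ i)))
  have hmeasIoc : ∀ i : ℕ, (f.measure (Ioc (u i) (u (i+1)))).toReal
      = f (u (i+1)) - f (u i) := by
    intro i
    rw [StieltjesFunction.measure_Ioc, ENNReal.toReal_ofReal (hufnn i)]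
  have hsplit := integral_Ioc_sum f.measure (g := g) hg u hu K
  rw [hu0, huK] at hsplit
  rw [hsplit, ← Finset.sum_sub_distrib]
  have hterm : ∀ i ∈ Finset.range K,
      |(∫ x in Ioc (u i) (u (i+1)), g x ∂f.measure)
        - g (i * T / K) * (f (min ((i+1) * T / K) t) - f (min (i * T / K) t))|
      ≤ ε' * (f (u (i+1)) - f (u i)) := by
    intro i hi
    have hiK : (i:ℝ) < K := by exact_mod_cast Finset.mem_range.1 hi
    have hfin : f.measure (Ioc (u i) (u (i+1))) < ⊤ := by
      rw [StieltjesFunction.measure_Ioc]; exact ENNReal.ofReal_lt_top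
    have hconst : ∫ x in Ioc (u i) (u (i+1)), g (i * T / K) ∂f.measure
        = g (i * T / K) * (f (u (i+1)) - f (u i)) := by
      rw [setIntegral_const, measureReal_def, hmeasIoc i, smul_eq_mul, mul_comm]
    have humin : u (i+1) = min (((i:ℝ)+1) * T / K) t := by
      simp only [hu_def]; push_cast; ring_nf
    have humin' : u i = min ((i:ℝ) * T / K) t := rfl
    have hx : ∀ x ∈ Ioc (u i) (u (i+1)), ‖g x - g (i * T / K)‖ ≤ ε' := by
      intro x hx
      have hxu : u i < x := hx.1
      have hxu' : x ≤ u (i+1) := hx.2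
      -- show s_i < x
      have hsi : (i:ℝ) * T / K < x := by
        rcases le_or_gt ((i:ℝ) * T / K) t with h | h
        · have : u i = (i:ℝ) * T / K := min_eq_left h
          linarith [this ▸ hxu]
        · exfalso
          have h1 : u i = t := min_eq_right h.le
          have h2 : u (i+1) ≤ t := min_le_right _ _
          rw [h1] at hxu; linarith
      have hxle : x ≤ ((i:ℝ)+1) * T / K := le_trans hxu' (humin ▸ min_le_left _ _)
      have hx0T : x ∈ Icc (0:ℝ) T := by
        constructor
        · have : (0:ℝ) ≤ (i:ℝ) * T / K := by positivity
          linarith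
        · refine le_trans (le_trans hxu' ?_) htT
          rw [humin]; exact min_le_right _ _
      have hs0T : (i:ℝ) * T / K ∈ Icc (0:ℝ) T := by
        constructor
        · positivity
        · rw [div_le_iff₀ (by positivity : (0:ℝ) < (K:ℝ))]
          nlinarith
      have hdist : |x - (i:ℝ) * T / K| ≤ T / K := by
        rw [abs_le]
        constructor
        · linarith
        · have : ((i:ℝ)+1) * T / K = (i:ℝ) * T / K + T / K := by ring
          linarith [this ▸ hxle]
      simpa [Real.norm_eq_abs] using hmod x hx0T _ hs0T hdist
    have hbound : ‖∫ x in Ioc (u i) (u (i+1)), (g x - g (i * T / K)) ∂f.measure‖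
        ≤ ε' * (f.measure (Ioc (u i) (u (i+1)))).toReal :=
      norm_setIntegral_le_of_norm_le_const hfin hx
    rw [integral_sub hg.integrableOn_Ioc (integrableOn_const hfin.ne),
        hconst] at hbound
    rw [hmeasIoc i] at hbound
    calc |(∫ x in Ioc (u i) (u (i+1)), g x ∂f.measure)
          - g (i * T / K) * (f (min (((i:ℝ)+1) * T / K) t) - f (min ((i:ℝ) * T / K) t))|
        = |(∫ x in Ioc (u i) (u (i+1)), g x ∂f.measure)
          - g (i * T / K) * (f (u (i+1)) - f (u i))| := by rw [humin, humin']
      _ ≤ ε' * (f (u (i+1)) - f (u i)) := by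
          simpa [Real.norm_eq_abs] using hbound
  calc |∑ i ∈ Finset.range K, ((∫ x in Ioc (u i) (u (i+1)), g x ∂f.measure)
        - g (i * T / K) * (f (min (((i:ℝ)+1) * T / K) t) - f (min ((i:ℝ) * T / K) t)))|
      ≤ ∑ i ∈ Finset.range K, |(∫ x in Ioc (u i) (u (i+1)), g x ∂f.measure)
        - g (i * T / K) * (f (min (((i:ℝ)+1) * T / K) t) - f (min ((i:ℝ) * T / K) t))| :=
        Finset.abs_sum_le_sum_abs _ _
    _ ≤ ∑ i ∈ Finset.range K, ε' * (f (u (i+1)) - f (u i)) :=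
        Finset.sum_le_sum hterm
    _ = ε' * (f (u K) - f (u 0)) := by
        rw [← Finset.mul_sum, Finset.sum_range_sub (fun i => f (u i))]
    _ ≤ ε' * (f T - f 0) := by
        rw [hu0, huK]
        apply mul_le_mul_of_nonneg_left _ hε'
        have := f.mono htT
        linarith [f.mono htT]

set_option maxHeartbeats 2000000 in
/-- if `X_n` are càdlàg, `Y_n` are nondecreasing càdlàg (Stieltjes
functions), `X, Y` are continuous and `X_n → X`, `Y_n → Y` locally uniformly on
`[0, ∞)`, then `Y` is nondecreasing and
`∫₀ᵗ X_n dY_n → ∫₀ᵗ X dY` locally uniformly in `t ≥ 0`. -/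
theorem statement11
    (Xn : ℕ → ℝ → ℝ) (hXn : ∀ n, IsCadlag (Xn n))
    (Yn : ℕ → StieltjesFunction ℝ)
    (X Y : ℝ → ℝ) (hX : Continuous X) (hY : Continuous Y)
    (hXconv : ∀ T > (0:ℝ),
      TendstoUniformlyOn (fun n => Xn n) X atTop (Set.Icc 0 T))
    (hYconv : ∀ T > (0:ℝ),
      TendstoUniformlyOn (fun n t => Yn n t) Y atTop (Set.Icc 0 T)) :
    MonotoneOn Y (Set.Ici 0) ∧
    ∀ SF : StieltjesFunction ℝ, (∀ t, SF t = Y t) →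
      ∀ T > (0:ℝ), TendstoUniformlyOn
        (fun n t => ∫ s in Set.Ioc (0:ℝ) t, Xn n s ∂(Yn n).measure)
        (fun t => ∫ s in Set.Ioc (0:ℝ) t, X s ∂SF.measure)
        atTop (Set.Icc 0 T) := by
  have hmono : MonotoneOn Y (Set.Ici 0) := by
    intro a ha b hb hab
    have ha' : (0:ℝ) ≤ a := ha
    have hb' : (0:ℝ) ≤ b := hb
    have hT : (0:ℝ) < b + 1 := by linarith
    have hA := (hYconv (b+1) hT).tendsto_at (x := a) ⟨ha', by linarith⟩
    have hB := (hYconv (b+1) hT).tendsto_at (x := b) ⟨hb', by linarith⟩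
    exact le_of_tendsto_of_tendsto' hA hB (fun n => (Yn n).mono hab)
  refine ⟨hmono, ?_⟩
  intro SF hSF T hT
  have hT0 : (0:ℝ) ≤ T := hT.le
  rw [Metric.tendstoUniformlyOn_iff]
  intro ε hε
  -- bound for X on [0,T]
  obtain ⟨C₀, hC₀⟩ := (isCompact_Icc (a := (0:ℝ)) (b := T)).exists_bound_of_continuousOn
    hX.continuousOn
  set C := max C₀ 0 with hCdef
  have hC0 : (0:ℝ) ≤ C := le_max_right _ _
  have hCb : ∀ x ∈ Icc (0:ℝ) T, |X x| ≤ C := fun x hx =>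
    le_trans (le_of_eq (Real.norm_eq_abs _).symm) ((hC₀ x hx).trans (le_max_left _ _))
  have hYT0 : Y 0 ≤ Y T := hmono (Set.mem_Ici.2 (le_refl 0)) hT0 hT0
  set M : ℝ := Y T - Y 0 + 1 with hMdef
  have hM : (0:ℝ) < M := by simp only [hMdef]; linarith
  set ε' : ℝ := ε / (8 * M) with hε'def
  have hε'pos : 0 < ε' := by positivity
  -- uniform continuity of X on [0,T]
  have hUC := (isCompact_Icc (a := (0:ℝ)) (b := T)).uniformContinuousOn_of_continuous
    hX.continuousOn
  rw [Metric.uniformContinuousOn_iff] at hUC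
  obtain ⟨δ', hδ'pos, hmod0⟩ := hUC ε' hε'pos
  obtain ⟨K, hK⟩ := exists_nat_gt (T / δ')
  have hTδ : 0 < T / δ' := by positivity
  have hKRpos : (0:ℝ) < (K:ℝ) := lt_trans hTδ hK
  have hKpos : 0 < K := by exact_mod_cast hKRpos
  have hTK : T / K < δ' := by
    rw [div_lt_iff₀ hKRpos]
    rw [div_lt_iff₀ hδ'pos] at hK
    linarith
  have hmod : ∀ x ∈ Icc (0:ℝ) T, ∀ y ∈ Icc (0:ℝ) T, |x - y| ≤ T / K → |X x - X y| ≤ ε' := by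
    intro x hx y hy hxy
    have := hmod0 x hx y hy (by rw [Real.dist_eq]; linarith)
    rw [Real.dist_eq] at this
    exact this.le
  set δ₁ : ℝ := ε / (8 * M) with hδ₁def
  have hδ₁pos : 0 < δ₁ := by positivity
  set η : ℝ := min (ε / (8 * K * (C + 1))) (1/2) with hηdef
  have hηpos : 0 < η := by
    apply lt_min _ (by norm_num)
    positivity
  have hη12 : η ≤ 1/2 := min_le_right _ _
  have hηε : η ≤ ε / (8 * K * (C + 1)) := min_le_left _ _
  have hXev := Metric.tendstoUniformlyOn_iff.1 (hXconv T hT) δ₁ hδ₁pos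
  have hYev := Metric.tendstoUniformlyOn_iff.1 (hYconv T hT) η hηpos
  filter_upwards [hXev, hYev] with n hXb hYb
  intro t ht
  obtain ⟨ht0, htT⟩ := ht
  -- abbreviations
  have hXnb : ∀ x ∈ Icc (0:ℝ) T, |Xn n x - X x| ≤ δ₁ := by
    intro x hx
    have := hXb x hx
    rw [Real.dist_eq, abs_sub_comm] at this
    exact this.le
  have hYnb : ∀ x ∈ Icc (0:ℝ) T, |Yn n x - Y x| ≤ η := by
    intro x hx
    have := hYb x hx
    rw [Real.dist_eq, abs_sub_comm] at this
    exact this.le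
  have hYnT : Yn n T - Yn n 0 ≤ M := by
    have h1 := (abs_le.1 (hYnb T ⟨hT0, le_refl T⟩)).2
    have h2 := (abs_le.1 (hYnb 0 ⟨le_refl 0, hT0⟩)).1
    simp only [hMdef]; linarith
  have hμnfin : (Yn n).measure (Ioc (0:ℝ) t) < ⊤ := by
    rw [StieltjesFunction.measure_Ioc]; exact ENNReal.ofReal_lt_top
  have hμntoReal : ((Yn n).measure (Ioc (0:ℝ) t)).toReal = Yn n t - Yn n 0 := by
    rw [StieltjesFunction.measure_Ioc, ENNReal.toReal_ofReal (sub_nonneg.2 ((Yn n).mono ht0))]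
  -- Term A : replace Xn by X under μn
  have hXnmeas : Measurable (Xn n) := measurable_of_rightCont (hXn n).1
  have hXnint : IntegrableOn (Xn n) (Ioc 0 t) (Yn n).measure := by
    refine ⟨hXnmeas.aestronglyMeasurable.restrict, ?_⟩
    apply MeasureTheory.HasFiniteIntegral.restrict_of_bounded (C := C + δ₁) hμnfin
    apply ae_restrict_of_forall_mem measurableSet_Ioc
    intro x hx
    have hxIcc : x ∈ Icc (0:ℝ) T := ⟨hx.1.le, hx.2.trans htT⟩
    have h1 := hXnb x hxIcc
    have h2 := hCb x hxIcc
    rw [Real.norm_eq_abs]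
    calc |Xn n x| = |X x + (Xn n x - X x)| := by ring_nf
      _ ≤ |X x| + |Xn n x - X x| := abs_add_le _ _
      _ ≤ C + δ₁ := add_le_add h2 h1
  have hXint : ∀ (f : StieltjesFunction ℝ), IntegrableOn X (Ioc 0 t) f.measure :=
    fun f => hX.integrableOn_Ioc
  have hA : |(∫ s in Ioc (0:ℝ) t, Xn n s ∂(Yn n).measure)
      - ∫ s in Ioc (0:ℝ) t, X s ∂(Yn n).measure| ≤ δ₁ * M := by
    rw [← integral_sub hXnint (hXint (Yn n))]
    have hb : ‖∫ s in Ioc (0:ℝ) t, (Xn n s - X s) ∂(Yn n).measure‖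
        ≤ δ₁ * ((Yn n).measure (Ioc (0:ℝ) t)).toReal := by
      apply norm_setIntegral_le_of_norm_le_const hμnfin
      · intro x hx
        have hxIcc : x ∈ Icc (0:ℝ) T := ⟨hx.1.le, hx.2.trans htT⟩
        rw [Real.norm_eq_abs]
        exact hXnb x hxIcc
    rw [Real.norm_eq_abs, hμntoReal] at hb
    have : Yn n t - Yn n 0 ≤ M := by
      have := (Yn n).mono htT
      linarith [hYnT]
    nlinarith [abs_nonneg (∫ s in Ioc (0:ℝ) t, (Xn n s - X s) ∂(Yn n).measure)]
  -- Riemann sums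
  set Sn : ℝ := ∑ i ∈ Finset.range K, X (i * T / K) *
    (Yn n (min ((i+1) * T / K) t) - Yn n (min (i * T / K) t)) with hSndef
  set S : ℝ := ∑ i ∈ Finset.range K, X (i * T / K) *
    (SF (min ((i+1) * T / K) t) - SF (min (i * T / K) t)) with hSdef
  have hB : |(∫ s in Ioc (0:ℝ) t, X s ∂(Yn n).measure) - Sn| ≤ ε' * M := by
    have := key (Yn n) hX hT hKpos hε'pos.le hmod ⟨ht0, htT⟩
    refine this.trans ?_
    apply mul_le_mul_of_nonneg_left hYnT hε'pos.le
  have hD : |(∫ s in Ioc (0:ℝ) t, X s ∂SF.measure) - S| ≤ ε' * M := by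
    have := key SF hX hT hKpos hε'pos.le hmod ⟨ht0, htT⟩
    refine this.trans ?_
    have : SF T - SF 0 ≤ M := by rw [hSF T, hSF 0, hMdef]; linarith
    exact mul_le_mul_of_nonneg_left this hε'pos.le
  -- Term C : Sn close to S
  have hCterm : |Sn - S| ≤ K * (C * (2 * η)) := by
    rw [hSndef, hSdef, ← Finset.sum_sub_distrib]
    refine (Finset.abs_sum_le_sum_abs _ _).trans ?_
    have hbound : ∀ i ∈ Finset.range K,
        |X (i * T / K) * (Yn n (min ((i+1) * T / K) t) - Yn n (min (i * T / K) t))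
          - X (i * T / K) * (SF (min ((i+1) * T / K) t) - SF (min (i * T / K) t))|
        ≤ C * (2 * η) := by
      intro i hi
      have hiK : (i:ℝ) < K := by exact_mod_cast Finset.mem_range.1 hi
      have hminmem : ∀ j : ℕ, min ((j:ℝ) * T / K) t ∈ Icc (0:ℝ) T := by
        intro j
        constructor
        · apply le_min (by positivity) ht0
        · exact le_trans (min_le_right _ _) htT
      have hsi : (i:ℝ) * T / K ∈ Icc (0:ℝ) T := by
        constructor
        · positivity
        · rw [div_le_iff₀ hKRpos]; nlinarith
      have h1 : |Yn n (min (((i:ℝ)+1) * T / K) t) - Y (min (((i:ℝ)+1) * T / K) t)| ≤ η := by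
        have := hYnb _ (hminmem (i+1))
        push_cast at this ⊢
        convert this using 4 <;> push_cast <;> ring
      have h2 := hYnb _ (hminmem i)
      have hXsi := hCb _ hsi
      rw [← mul_sub, abs_mul]
      have harg : |(Yn n (min (((i:ℝ)+1) * T / K) t) - Yn n (min ((i:ℝ) * T / K) t))
          - (SF (min (((i:ℝ)+1) * T / K) t) - SF (min ((i:ℝ) * T / K) t))| ≤ 2 * η := by
        rw [hSF, hSF]
        calc |(Yn n (min (((i:ℝ)+1) * T / K) t) - Yn n (min ((i:ℝ) * T / K) t))
              - (Y (min (((i:ℝ)+1) * T / K) t) - Y (min ((i:ℝ) * T / K) t))|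
            = |(Yn n (min (((i:ℝ)+1) * T / K) t) - Y (min (((i:ℝ)+1) * T / K) t))
              - (Yn n (min ((i:ℝ) * T / K) t) - Y (min ((i:ℝ) * T / K) t))| := by ring_nf
          _ ≤ |Yn n (min (((i:ℝ)+1) * T / K) t) - Y (min (((i:ℝ)+1) * T / K) t)|
              + |Yn n (min ((i:ℝ) * T / K) t) - Y (min ((i:ℝ) * T / K) t)| := abs_sub _ _
          _ ≤ η + η := add_le_add h1 h2
          _ = 2 * η := by ring
      exact mul_le_mul hXsi harg (abs_nonneg _) hC0
    refine (Finset.sum_le_sum hbound).trans ?_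
    rw [Finset.sum_const, Finset.card_range, nsmul_eq_mul]
  -- combine
  have hδ₁M : δ₁ * M = ε / 8 := by
    rw [hδ₁def]; field_simp
  have hε'M : ε' * M = ε / 8 := by
    rw [hε'def]; exact hδ₁M
  have hCη : (K:ℝ) * (C * (2 * η)) ≤ ε / 4 := by
    have h1 : (K:ℝ) * (C * (2 * η)) ≤ (K:ℝ) * (C * (2 * (ε / (8 * K * (C + 1))))) := by
      apply mul_le_mul_of_nonneg_left _ hKRpos.le
      apply mul_le_mul_of_nonneg_left _ hC0
      linarith
    refine h1.trans ?_
    have hCne : (0:ℝ) < C + 1 := by linarith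
    have e : (K:ℝ) * (C * (2 * (ε / (8 * K * (C + 1))))) = ε * C / (4 * (C + 1)) := by
      field_simp; ring
    rw [e, div_le_div_iff₀ (by positivity) (by norm_num : (0:ℝ) < 4)]
    nlinarith [hε.le, hC0]
  rw [Real.dist_eq]
  have htotal : |(∫ s in Ioc (0:ℝ) t, X s ∂SF.measure)
      - ∫ s in Ioc (0:ℝ) t, Xn n s ∂(Yn n).measure| ≤ ε/8 + ε/8 + ε/4 + ε/8 := by
    have e : (∫ s in Ioc (0:ℝ) t, X s ∂SF.measure)
        - ∫ s in Ioc (0:ℝ) t, Xn n s ∂(Yn n).measure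
        = -(((∫ s in Ioc (0:ℝ) t, Xn n s ∂(Yn n).measure)
            - ∫ s in Ioc (0:ℝ) t, X s ∂(Yn n).measure)
          + ((∫ s in Ioc (0:ℝ) t, X s ∂(Yn n).measure) - Sn)
          + (Sn - S)
          + (S - ∫ s in Ioc (0:ℝ) t, X s ∂SF.measure)) := by ring
    rw [e, abs_neg]
    calc _ ≤ |((∫ s in Ioc (0:ℝ) t, Xn n s ∂(Yn n).measure)
            - ∫ s in Ioc (0:ℝ) t, X s ∂(Yn n).measure)
          + ((∫ s in Ioc (0:ℝ) t, X s ∂(Yn n).measure) - Sn)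
          + (Sn - S)|
          + |S - ∫ s in Ioc (0:ℝ) t, X s ∂SF.measure| := abs_add_le _ _
      _ ≤ |((∫ s in Ioc (0:ℝ) t, Xn n s ∂(Yn n).measure)
            - ∫ s in Ioc (0:ℝ) t, X s ∂(Yn n).measure)
          + ((∫ s in Ioc (0:ℝ) t, X s ∂(Yn n).measure) - Sn)|
          + |Sn - S| + |S - ∫ s in Ioc (0:ℝ) t, X s ∂SF.measure| := by
            have := abs_add_le (((∫ s in Ioc (0:ℝ) t, Xn n s ∂(Yn n).measure)
              - ∫ s in Ioc (0:ℝ) t, X s ∂(Yn n).measure)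
              + ((∫ s in Ioc (0:ℝ) t, X s ∂(Yn n).measure) - Sn)) (Sn - S)
            linarith
      _ ≤ ε/8 + ε/8 + ε/4 + ε/8 := by
            have t1 := abs_add_le ((∫ s in Ioc (0:ℝ) t, Xn n s ∂(Yn n).measure)
              - ∫ s in Ioc (0:ℝ) t, X s ∂(Yn n).measure)
              ((∫ s in Ioc (0:ℝ) t, X s ∂(Yn n).measure) - Sn)
            have hD' : |S - ∫ s in Ioc (0:ℝ) t, X s ∂SF.measure| ≤ ε' * M := by
              rw [abs_sub_comm]; exact hD
            rw [hδ₁M] at hA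
            rw [hε'M] at hB hD'
            linarith [hCterm, hCη]
  linarith [htotal, hε]
end

section
/- Let (Θ_k)_{k≥1} be i.i.d., square-integrable, nonnegative integer-valued random variables and (Ξ_k)_{k≥1} i.i.d. standard exponential random variables independent of (Θ_k). For ρ > 0 and constants ν, α, δ > 0, set b_N = ((N²ν² + 2Nαδ)T/(2a)) · E[exp(−ρ(Nν² + 2αδ)/(2|Θ̃₁|))], where Θ̃₁ = Θ₁ − a ≠ 0 is assumed (and the term vanishes when Θ̃₁ = 0). Then b_N → 0 as N → ∞. -/
open MeasureTheory ProbabilityTheory Set Filter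

private lemma exp_neg_le_four_div_sq {x : ℝ} (hx : 0 < x) : Real.exp (-x) ≤ 4 / x ^ 2 := by
  have h1 : x / 2 + 1 ≤ Real.exp (x / 2) := by
    have := Real.add_one_le_exp (x / 2); linarith
  have h2 : Real.exp x = Real.exp (x / 2) * Real.exp (x / 2) := by
    rw [← Real.exp_add]; ring_nf
  have h3 : x ^ 2 / 4 ≤ Real.exp x := by nlinarith
  rw [Real.exp_neg]
  have h4 : (Real.exp x)⁻¹ ≤ (x ^ 2 / 4)⁻¹ := by
    apply inv_anti₀ (by positivity) h3
  calc (Real.exp x)⁻¹ ≤ (x ^ 2 / 4)⁻¹ := h4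
    _ = 4 / x ^ 2 := by rw [inv_div]

private lemma exp_neg_le_cube {x : ℝ} (hx : 0 < x) : Real.exp (-x) ≤ 27 / x ^ 3 := by
  have h1 : x / 3 + 1 ≤ Real.exp (x / 3) := by
    have := Real.add_one_le_exp (x / 3); linarith
  have h2 : Real.exp x = Real.exp (x / 3) * Real.exp (x / 3) * Real.exp (x / 3) := by
    rw [← Real.exp_add, ← Real.exp_add]; ring_nf
  have hex : (0:ℝ) < Real.exp (x / 3) := Real.exp_pos _
  have h5 : x / 3 ≤ Real.exp (x / 3) := by linarith
  have h6 : (x / 3) ^ 3 ≤ (Real.exp (x / 3)) ^ 3 := pow_le_pow_left₀ (by positivity) h5 3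
  have h3 : x ^ 3 / 27 ≤ Real.exp x := by
    calc x ^ 3 / 27 = (x / 3) ^ 3 := by ring
      _ ≤ (Real.exp (x / 3)) ^ 3 := h6
      _ = Real.exp x := by rw [h2]; ring
  rw [Real.exp_neg]
  calc (Real.exp x)⁻¹ ≤ (x ^ 3 / 27)⁻¹ := inv_anti₀ (by positivity) h3
    _ = 27 / x ^ 3 := by rw [inv_div]


private lemma cube_eq {a ρ k y T : ℝ} (N : ℝ) (ha : a ≠ 0) (hρ : ρ ≠ 0) (hk : k ≠ 0)
    (hy : y ≠ 0) :
    N * k * T / (2 * a) * (27 / (ρ * k / (2 * y)) ^ 3) =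
      108 * T * (N * y ^ 3) / (a * ρ ^ 3 * k ^ 2) := by
  field_simp; ring

private lemma cdiv_eq {a ρ ν y T : ℝ} (N : ℝ) (ha : a ≠ 0) (hρ : ρ ≠ 0) (hν : ν ≠ 0)
    (hN : N ≠ 0) :
    108 * T * y ^ 3 / (a * ρ ^ 3 * ν ^ 4) / N = 108 * T * y ^ 3 / (a * ρ ^ 3 * ν ^ 4 * N) := by
  rw [div_div]

set_option maxHeartbeats 1600000 in
/-- for `Θ₁` square integrable with `Θ̃₁ = Θ₁ - a`, and positive constants
`ρ, ν, α, δ, a, T`, the quantity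
`b_N = ((N²ν² + 2Nαδ)T/(2a)) E[exp(-ρ(Nν² + 2αδ)/(2|Θ̃₁|))]`
(with the integrand read as `0` on `{Θ̃₁ = 0}`) tends to `0` as `N → ∞`. -/
theorem statement14 {Ω : Type*} [MeasureSpace Ω] [IsProbabilityMeasure (ℙ : Measure Ω)]
    (ρ ν α δ a T : ℝ) (hρ : 0 < ρ) (hν : 0 < ν) (hα : 0 < α) (hδ : 0 < δ)
    (ha : 0 < a) (hT : 0 < T)
    (Θ : Ω → ℝ) (hΘ_meas : Measurable Θ)
    (hΘ_sq : Integrable (fun ω => (Θ ω - a) ^ 2) (ℙ : Measure Ω))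
    (b : ℕ → ℝ)
    (hb : ∀ N : ℕ, b N = ((N : ℝ) ^ 2 * ν ^ 2 + 2 * N * α * δ) * T / (2 * a) *
      ∫ ω, (if Θ ω = a then (0:ℝ)
        else Real.exp (-(ρ * ((N : ℝ) * ν ^ 2 + 2 * α * δ)) / (2 * |Θ ω - a|)))
        ∂(ℙ : Measure Ω)) :
    Tendsto b atTop (nhds 0) := by
  set F : ℕ → Ω → ℝ := fun N ω =>
    ((N : ℝ) ^ 2 * ν ^ 2 + 2 * N * α * δ) * T / (2 * a) *
      (if Θ ω = a then (0:ℝ)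
        else Real.exp (-(ρ * ((N : ℝ) * ν ^ 2 + 2 * α * δ)) / (2 * |Θ ω - a|))) with hF
  have hbF : ∀ N, b N = ∫ ω, F N ω := by
    intro N
    rw [hb N, ← integral_const_mul]
  have hkpos : ∀ N : ℕ, (0:ℝ) < (N : ℝ) * ν ^ 2 + 2 * α * δ := by
    intro N
    have : (0:ℝ) ≤ (N : ℝ) * ν ^ 2 := by positivity
    nlinarith
  have hcnn : ∀ N : ℕ, (0:ℝ) ≤ ((N : ℝ) ^ 2 * ν ^ 2 + 2 * N * α * δ) * T / (2 * a) := by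
    intro N; positivity
  -- key uniform bound
  have hbound : ∀ N : ℕ, ∀ ω : Ω, ‖F N ω‖ ≤ 8 * T / (a * ν ^ 2 * ρ ^ 2) * (Θ ω - a) ^ 2 := by
    intro N ω
    by_cases hω : Θ ω = a
    · simp only [hF, hω, eq_self_iff_true, if_true, mul_zero, norm_zero]
      positivity
    · have hy : 0 < |Θ ω - a| := abs_pos.mpr (sub_ne_zero.mpr hω)
      set y := |Θ ω - a| with hydef
      set k := (N : ℝ) * ν ^ 2 + 2 * α * δ with hkdef
      have hk := hkpos N
      have hx : 0 < ρ * k / (2 * y) := by positivity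
      have hexp : Real.exp (-(ρ * k) / (2 * y)) ≤ 4 / (ρ * k / (2 * y)) ^ 2 := by
        rw [neg_div]
        exact exp_neg_le_four_div_sq hx
      have hFval : F N ω = ((N : ℝ) ^ 2 * ν ^ 2 + 2 * N * α * δ) * T / (2 * a) *
          Real.exp (-(ρ * k) / (2 * y)) := by
        simp only [hF, if_neg hω]; rfl
      rw [hFval, Real.norm_eq_abs, abs_of_nonneg (by positivity)]
      have hc : ((N : ℝ) ^ 2 * ν ^ 2 + 2 * N * α * δ) = (N : ℝ) * k := by
        rw [hkdef]; ring
      have hchain : ((N : ℝ) ^ 2 * ν ^ 2 + 2 * N * α * δ) * T / (2 * a) *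
          Real.exp (-(ρ * k) / (2 * y)) ≤
          ((N : ℝ) ^ 2 * ν ^ 2 + 2 * N * α * δ) * T / (2 * a) *
          (4 / (ρ * k / (2 * y)) ^ 2) := by
        apply mul_le_mul_of_nonneg_left hexp (hcnn N)
      refine hchain.trans ?_
      rw [hc]
      have hNk : (N : ℝ) * ν ^ 2 ≤ k := by rw [hkdef]; nlinarith
      have h4 : (4 : ℝ) / (ρ * k / (2 * y)) ^ 2 = 16 * y ^ 2 / (ρ ^ 2 * k ^ 2) := by
        field_simp; ring
      rw [h4]
      have hysq : (Θ ω - a) ^ 2 = y ^ 2 := (sq_abs _).symm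
      rw [hysq]
      have heq : (N : ℝ) * k * T / (2 * a) * (16 * y ^ 2 / (ρ ^ 2 * k ^ 2)) =
          8 * T * ((N : ℝ) * y ^ 2) / (a * ρ ^ 2 * k) := by
        field_simp; ring
      have heq2 : 8 * T / (a * ν ^ 2 * ρ ^ 2) * y ^ 2 = 8 * T * y ^ 2 / (a * ν ^ 2 * ρ ^ 2) := by
        ring
      rw [heq, heq2, div_le_div_iff₀ (by positivity) (by positivity)]
      have hNnn : (0:ℝ) ≤ (N : ℝ) := Nat.cast_nonneg N
      have hP : (0:ℝ) ≤ 8 * T * y ^ 2 * a * ρ ^ 2 := by positivity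
      nlinarith [mul_le_mul_of_nonneg_left hNk hP]
  -- pointwise limit
  have hlim : ∀ ω : Ω, Tendsto (fun N => F N ω) atTop (nhds 0) := by
    intro ω
    by_cases hω : Θ ω = a
    · simp only [hF, hω, eq_self_iff_true, if_true, mul_zero]
      exact tendsto_const_nhds
    · have hy : 0 < |Θ ω - a| := abs_pos.mpr (sub_ne_zero.mpr hω)
      set y := |Θ ω - a| with hydef
      set C : ℝ := 108 * T * y ^ 3 / (a * ρ ^ 3 * ν ^ 4) with hC
      have hCpos : 0 < C := by positivity
      apply tendsto_of_tendsto_of_tendsto_of_le_of_le' tendsto_const_nhds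
        (tendsto_const_div_atTop_nhds_zero_nat C)
      · filter_upwards with N
        simp only [hF, if_neg hω]
        positivity
      · filter_upwards [eventually_ge_atTop 1] with N hN1
        have hN1' : (1:ℝ) ≤ (N:ℝ) := by exact_mod_cast hN1
        have hNpos : (0:ℝ) < (N:ℝ) := by linarith
        set k := (N : ℝ) * ν ^ 2 + 2 * α * δ with hkdef
        have hk := hkpos N
        have hx : 0 < ρ * k / (2 * y) := by positivity
        have hexp : Real.exp (-(ρ * k) / (2 * y)) ≤ 27 / (ρ * k / (2 * y)) ^ 3 := by
          rw [neg_div]; exact exp_neg_le_cube hx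
        have hFval : F N ω = ((N : ℝ) ^ 2 * ν ^ 2 + 2 * N * α * δ) * T / (2 * a) *
            Real.exp (-(ρ * k) / (2 * y)) := by
          simp only [hF, if_neg hω]; rfl
        rw [hFval]
        have hc : ((N : ℝ) ^ 2 * ν ^ 2 + 2 * N * α * δ) = (N : ℝ) * k := by
          rw [hkdef]; ring
        have hchain : ((N : ℝ) ^ 2 * ν ^ 2 + 2 * N * α * δ) * T / (2 * a) *
            Real.exp (-(ρ * k) / (2 * y)) ≤
            ((N : ℝ) ^ 2 * ν ^ 2 + 2 * N * α * δ) * T / (2 * a) *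
            (27 / (ρ * k / (2 * y)) ^ 3) := mul_le_mul_of_nonneg_left hexp (hcnn N)
        refine hchain.trans ?_
        rw [hc]
        have hNk : (N : ℝ) * ν ^ 2 ≤ k := by rw [hkdef]; nlinarith
        have heq : (N : ℝ) * k * T / (2 * a) * (27 / (ρ * k / (2 * y)) ^ 3) =
            108 * T * ((N : ℝ) * y ^ 3) / (a * ρ ^ 3 * k ^ 2) :=
          cube_eq (N:ℝ) (ne_of_gt ha) (ne_of_gt hρ) (ne_of_gt hk) (ne_of_gt hy)
        have hCN : C / (N:ℝ) = 108 * T * y ^ 3 / (a * ρ ^ 3 * ν ^ 4 * (N:ℝ)) := by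
          rw [hC]
          exact cdiv_eq (N:ℝ) (ne_of_gt ha) (ne_of_gt hρ) (ne_of_gt hν) (ne_of_gt hNpos)
        rw [heq, hCN, div_le_div_iff₀ (by positivity) (by positivity)]
        have hk2 : (N:ℝ) ^ 2 * ν ^ 4 ≤ k ^ 2 := by
          have h1 : (N:ℝ) * ν ^ 2 ≤ k := hNk
          have h2 : (0:ℝ) ≤ (N:ℝ) * ν ^ 2 := by positivity
          calc (N : ℝ) ^ 2 * ν ^ 4 = ((N:ℝ) * ν ^ 2) * ((N:ℝ) * ν ^ 2) := by ring
            _ ≤ k * k := mul_le_mul h1 h1 h2 (le_trans h2 h1)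
            _ = k ^ 2 := (sq k).symm
        have hP : (0:ℝ) ≤ 108 * T * y ^ 3 * a * ρ ^ 3 := by positivity
        nlinarith [mul_le_mul_of_nonneg_left hk2 hP]
  -- dominated convergence
  have hmeas : ∀ N : ℕ, AEStronglyMeasurable (F N) (ℙ : Measure Ω) := by
    intro N
    apply AEStronglyMeasurable.const_mul
    apply Measurable.aestronglyMeasurable
    apply Measurable.ite (hΘ_meas (measurableSet_singleton a)) measurable_const
    apply Real.measurable_exp.comp
    apply Measurable.div measurable_const
    exact (measurable_const.mul ((hΘ_meas.sub measurable_const).abs))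
  have hGint : Integrable (fun ω => 8 * T / (a * ν ^ 2 * ρ ^ 2) * (Θ ω - a) ^ 2)
      (ℙ : Measure Ω) := hΘ_sq.const_mul _
  have hmain : Tendsto (fun N => ∫ ω, F N ω ∂(ℙ : Measure Ω)) atTop
      (nhds (∫ ω, (0:ℝ) ∂(ℙ : Measure Ω))) := by
    apply tendsto_integral_of_dominated_convergence _ hmeas hGint
    · intro N
      filter_upwards with ω
      exact hbound N ω
    · filter_upwards with ω
      exact hlim ω
  rw [integral_zero] at hmain
  have : b = fun N => ∫ ω, F N ω ∂(ℙ : Measure Ω) := funext hbF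
  rw [this]
  exact hmain
end
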